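/- For every real a with 0 ≤ a ≤ 1 and every real x with x ≤ -1 or x > 0, one has (1 + 1/x)^a ≥ 1 + a/(x + 1 - a). -/

import Mathlib

theorem rpow_ineq_three (a x : ℝ) (ha0 : 0 ≤ a) (ha1 : a ≤ 1)
    (hx : x ≤ -1 ∨ 0 < x) :
    (1 + 1 / x) ^ a ≥ 1 + a / (x + 1 - a) := by
  rcases eq_or_lt_of_le ha0 with rfl | ha0'
  · simp
  by_cases hx1 : x = -1
  · subst hx1
    rw [show (1 : ℝ) + 1 / (-1) = 0 by norm_num,
      Real.zero_rpow (ne_of_gt ha0'),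
      show (-1 : ℝ) + 1 - a = -a by ring, div_neg, div_self (ne_of_gt ha0')]
    norm_num
  -- signs
  have hx0 : x ≠ 0 := by rcases hx with h | h <;> nlinarith
  have hx1' : x + 1 ≠ 0 := fun h => hx1 (by linarith)
  have hb : 0 < x / (x + 1) := by
    rcases hx with h | h
    · have h' : x < -1 := lt_of_le_of_ne h hx1
      exact div_pos_of_neg_of_neg (by linarith) (by linarith)
    · exact div_pos (by linarith) (by linarith)
  have hc : 0 < (x + 1 - a) / (x + 1) := by
    rcases hx with h | h
    · have h' : x < -1 := lt_of_le_of_ne h hx1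
      exact div_pos_of_neg_of_neg (by linarith) (by linarith)
    · exact div_pos (by linarith) (by linarith)
  have hs : -1 ≤ -1 / (x + 1) := by
    rcases hx with h | h
    · have h' : x < -1 := lt_of_le_of_ne h hx1
      have : 0 < -1 / (x + 1) := div_pos_of_neg_of_neg (by norm_num) (by linarith)
      linarith
    · rw [le_div_iff₀ (by linarith : 0 < x + 1)]
      nlinarith
  have B := rpow_one_add_le_one_add_mul_self hs ha0 ha1
  have e1 : 1 + -1 / (x + 1) = x / (x + 1) := by field_simp; ring
  have e2 : 1 + a * (-1 / (x + 1)) = (x + 1 - a) / (x + 1) := by field_simp; ring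
  rw [e1, e2] at B
  have hba : 0 < (x / (x + 1)) ^ a := Real.rpow_pos_of_pos hb a
  have hinv : ((x + 1 - a) / (x + 1))⁻¹ ≤ ((x / (x + 1)) ^ a)⁻¹ :=
    inv_anti₀ hba B
  have e3 : (1 + 1 / x) = (x / (x + 1))⁻¹ := by field_simp
  rw [ge_iff_le, e3, Real.inv_rpow hb.le]
  have e4 : 1 + a / (x + 1 - a) = ((x + 1 - a) / (x + 1))⁻¹ := by
    have hne : x + 1 - a ≠ 0 := by
      rcases hx with h | h
      · have h' : x < -1 := lt_of_le_of_ne h hx1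
        intro hh; nlinarith
      · intro hh; nlinarith
    field_simp
    ring
  rw [e4]
  exact hinv
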